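/- (Preconditioner symbol estimates.) For every η ≥ 0 and every δ₀ > 0 there exists a constant C > 0 such that for all real δ with 0 < |δ| ≤ δ₀ and δ²η² ≤ 1/2, and all k ∈ ℝ: (i) |1 − δ²(ik − η)²| ≥ 1/2 + δ²k²; and (ii) (1 + k²) / |1 − δ²(ik − η)²|² ≤ C/δ². -/

import Mathlib

theorem stmt6 (η : ℝ) (hη : 0 ≤ η) (δ₀ : ℝ) (hδ₀ : 0 < δ₀) :
    ∃ C > (0 : ℝ), ∀ δ : ℝ, 0 < |δ| → |δ| ≤ δ₀ → δ ^ 2 * η ^ 2 ≤ 1 / 2 → ∀ k : ℝ,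
      (1 / 2 + δ ^ 2 * k ^ 2
          ≤ ‖(1 - (δ : ℂ) ^ 2 * (Complex.I * (k : ℂ) - (η : ℂ)) ^ 2)‖)
        ∧ (1 + k ^ 2) /
            ‖(1 - (δ : ℂ) ^ 2 * (Complex.I * (k : ℂ) - (η : ℂ)) ^ 2)‖ ^ 2
          ≤ C / δ ^ 2 := by
  refine ⟨4 * δ₀ ^ 2 + 1, by positivity, fun δ hδ hδ0 hδη k => ?_⟩
  set z : ℂ := 1 - (δ : ℂ) ^ 2 * (Complex.I * (k : ℂ) - (η : ℂ)) ^ 2 with hz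
  have hre : z.re = 1 - δ ^ 2 * η ^ 2 + δ ^ 2 * k ^ 2 := by
    simp [hz, Complex.sub_re, Complex.mul_re, Complex.mul_im, pow_two]
    ring
  have hδne : δ ≠ 0 := fun h => by simp [h] at hδ
  have hδpos : (0 : ℝ) < δ ^ 2 := by positivity
  have h1 : 1 / 2 + δ ^ 2 * k ^ 2 ≤ ‖z‖ := by
    calc 1 / 2 + δ ^ 2 * k ^ 2 ≤ z.re := by rw [hre]; linarith
    _ ≤ ‖z‖ := Complex.re_le_norm z
  have hApos : (0 : ℝ) < ‖z‖ := lt_of_lt_of_le (by positivity) h1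
  refine ⟨h1, ?_⟩
  rw [div_le_div_iff₀ (by positivity) hδpos]
  have hδ₀2 : δ ^ 2 ≤ δ₀ ^ 2 := by
    have := sq_abs δ
    nlinarith [sq_nonneg (|δ| - δ₀)]
  have key : (1 + k ^ 2) * δ ^ 2 ≤ (4 * δ₀ ^ 2 + 1) * (1 / 2 + δ ^ 2 * k ^ 2) ^ 2 := by
    nlinarith [sq_nonneg (δ * k), sq_nonneg (δ ^ 2 * k ^ 2), sq_nonneg δ₀, sq_nonneg k]
  calc (1 + k ^ 2) * δ ^ 2 ≤ (4 * δ₀ ^ 2 + 1) * (1 / 2 + δ ^ 2 * k ^ 2) ^ 2 := key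
  _ ≤ (4 * δ₀ ^ 2 + 1) * ‖z‖ ^ 2 := by
      apply mul_le_mul_of_nonneg_left _ (by positivity)
      exact pow_le_pow_left₀ (by positivity) h1 2
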